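/- For the second-order utility U(X_S) = U(X_D) + G·(X_S - X_D) + (1/2)(X_S - X_D)ᵀ H (X_S - X_D), the Shapley value of player j equals G·X_j - (1/2) X_Dᵀ H X_j. -/

import Mathlib

open Finset Matrix

lemma filter_mem_powersetCard_card {α : Type*} [DecidableEq α] (s : Finset α) (r : ℕ) (i : α) :
    ((s.powersetCard r).filter (fun S => i ∈ S)).card
      = s.card.choose r - ((s.erase i).card).choose r := by
  have hneg : (s.powersetCard r).filter (fun S => i ∉ S) = (s.erase i).powersetCard r := by
    ext S
    simp only [Finset.mem_filter, Finset.mem_powersetCard, Finset.subset_erase]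
    tauto
  have h := Finset.card_filter_add_card_filter_not
    (s := s.powersetCard r) (p := fun S => i ∈ S)
  rw [hneg, Finset.card_powersetCard, Finset.card_powersetCard] at h
  omega

lemma sum_powersetCard_sum {α : Type*} [DecidableEq α] (s : Finset α) (r : ℕ) (f : α → ℝ) :
    ∑ S ∈ s.powersetCard r, ∑ i ∈ S, f i
      = ∑ i ∈ s, (((s.card.choose r : ℝ)) - (((s.card - 1).choose r : ℝ))) * f i := by
  have h1 : ∀ S ∈ s.powersetCard r, ∑ i ∈ S, f i = ∑ i ∈ s, if i ∈ S then f i else 0 := by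
    intro S hS
    rw [Finset.mem_powersetCard] at hS
    rw [← Finset.sum_filter, Finset.filter_mem_eq_inter, Finset.inter_comm,
      Finset.inter_eq_left.mpr hS.1]
  rw [Finset.sum_congr rfl h1, Finset.sum_comm]
  refine Finset.sum_congr rfl fun i hi => ?_
  rw [← Finset.sum_filter, Finset.sum_const, filter_mem_powersetCard_card,
    Finset.card_erase_of_mem hi]
  have hle : (s.card - 1).choose r ≤ s.card.choose r :=
    Nat.choose_le_choose r (Nat.sub_le _ _)
  rw [nsmul_eq_mul, Nat.cast_sub hle]
open Finset

lemma coeff_term (e r : ℕ) (hr : r < e + 2) :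
    (((e + 1).choose r : ℝ))⁻¹ * (((e + 1).choose r : ℝ) - ((e).choose r : ℝ))
      = (r : ℝ) / ((e : ℝ) + 1) := by
  have hC : ((e + 1).choose r : ℝ) ≠ 0 :=
    Nat.cast_ne_zero.mpr (Nat.choose_pos (show r ≤ e + 1 by omega)).ne'
  match r with
  | 0 => simp
  | (t + 1) =>
    have hpascal : (e + 1).choose (t + 1) = e.choose t + e.choose (t + 1) :=
      Nat.choose_succ_succ e t
    have hmul : (e + 1) * e.choose t = (e + 1).choose (t + 1) * (t + 1) :=
      Nat.add_one_mul_choose_eq e t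
    have hmulR : ((e : ℝ) + 1) * (e.choose t : ℝ) = ((e + 1).choose (t + 1) : ℝ) * ((t : ℝ) + 1) := by
      exact_mod_cast hmul
    have hnum : ((e + 1).choose (t + 1) : ℝ) - (e.choose (t + 1) : ℝ) = (e.choose t : ℝ) := by
      rw [hpascal]; push_cast; ring
    rw [hnum]
    have he1 : ((e : ℝ) + 1) ≠ 0 := by positivity
    field_simp
    push_cast
    linarith [hmulR]

lemma coeff_sum (d : ℕ) (hd : 2 ≤ d) :
    ∑ k ∈ Finset.Icc 1 d, (((d - 1).choose (k - 1) : ℝ))⁻¹ *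
        (((d - 1).choose (k - 1) : ℝ) - ((d - 2).choose (k - 1) : ℝ))
      = (d : ℝ) / 2 := by
  obtain ⟨e, rfl⟩ : ∃ e, d = e + 2 := ⟨d - 2, by omega⟩
  have hre : ∑ k ∈ Finset.Icc 1 (e + 2), (((e + 2 - 1).choose (k - 1) : ℝ))⁻¹ *
        (((e + 2 - 1).choose (k - 1) : ℝ) - ((e + 2 - 2).choose (k - 1) : ℝ))
      = ∑ r ∈ Finset.range (e + 2), ((r : ℝ)) / ((e : ℝ) + 1) := by
    refine Finset.sum_nbij' (fun k => k - 1) (fun r => r + 1) ?_ ?_ ?_ ?_ ?_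
    · intro k hk; simp only [Finset.mem_Icc] at hk; simp only [Finset.mem_range]; omega
    · intro r hr; simp only [Finset.mem_range] at hr; simp only [Finset.mem_Icc]; omega
    · intro k hk; simp only [Finset.mem_Icc] at hk; omega
    · intro r hr; omega
    · intro k hk
      simp only [Finset.mem_Icc] at hk
      have h1 : e + 2 - 1 = e + 1 := by omega
      have h2 : e + 2 - 2 = e := by omega
      rw [h1, h2]
      exact coeff_term e (k - 1) (by omega)
  rw [hre, ← Finset.sum_div]
  have hg : ∑ r ∈ Finset.range (e + 2), (r : ℝ) = ((e : ℝ) + 2) * ((e : ℝ) + 1) / 2 := by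
    have h := Finset.sum_range_id_mul_two (e + 2)
    have hc := congrArg (fun n : ℕ => (n : ℝ)) h
    push_cast at hc
    linarith
  rw [hg]
  have he1 : ((e : ℝ) + 1) ≠ 0 := by positivity
  field_simp
  push_cast
  ring
open Finset Matrix

lemma sum_dotProduct' {ι m : Type*} [Fintype m] (S : Finset ι) (X : ι → m → ℝ) (v : m → ℝ) :
    (∑ i ∈ S, X i) ⬝ᵥ v = ∑ i ∈ S, (X i ⬝ᵥ v) := by
  simp only [dotProduct, Finset.sum_apply, Finset.sum_mul]
  exact Finset.sum_comm

/-- For the second-order utility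
`U x = U X_D + G ⬝ (x - X_D) + (1/2)(x - X_D)ᵀ H (x - X_D)` with `H` symmetric,
the Shapley value of player `j` equals `G ⬝ X_j - (1/2) X_Dᵀ H X_j`. -/
theorem shapley_second_order_utility (d m : ℕ) (hd : 0 < d)
    (X : Fin d → Fin m → ℝ) (G : Fin m → ℝ)
    (H : Matrix (Fin m) (Fin m) ℝ) (hH : H.IsSymm)
    (U : (Fin m → ℝ) → ℝ)
    (hU : ∀ x, U x = U (∑ i, X i) + G ⬝ᵥ (x - ∑ i, X i)
        + (1 / 2) * ((x - ∑ i, X i) ⬝ᵥ H.mulVec (x - ∑ i, X i)))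
    (j : Fin d) :
    (1 / (d : ℝ)) * ∑ k ∈ Finset.Icc 1 d,
        (((d - 1).choose (k - 1) : ℝ))⁻¹ *
          ∑ S ∈ (Finset.univ.erase j).powersetCard (k - 1),
            (U (∑ i ∈ insert j S, X i) - U (∑ i ∈ S, X i))
      = G ⬝ᵥ X j - (1 / 2) * ((∑ i, X i) ⬝ᵥ H.mulVec (X j)) := by
  set v : Fin m → ℝ := H.mulVec (X j) with hv
  set T : Fin m → ℝ := ∑ i, X i with hT
  have hsym : ∀ x y : Fin m → ℝ, x ⬝ᵥ H.mulVec y = y ⬝ᵥ H.mulVec x := by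
    intro x y
    rw [Matrix.dotProduct_mulVec, ← Matrix.mulVec_transpose, hH.eq, dotProduct_comm]
  set c0 : ℝ := G ⬝ᵥ X j + (1/2) * (X j ⬝ᵥ v) - T ⬝ᵥ v with hc0
  -- per-S difference
  have hterm : ∀ S : Finset (Fin d), j ∉ S →
      U (∑ i ∈ insert j S, X i) - U (∑ i ∈ S, X i) = c0 + ∑ i ∈ S, (X i ⬝ᵥ v) := by
    intro S hjS
    rw [Finset.sum_insert hjS, hU (X j + ∑ i ∈ S, X i), hU (∑ i ∈ S, X i)]
    set a : Fin m → ℝ := ∑ i ∈ S, X i with ha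
    have hsum : (∑ i ∈ S, X i) ⬝ᵥ v = ∑ i ∈ S, (X i ⬝ᵥ v) := sum_dotProduct' _ _ _
    have hrw : X j + a - T = X j + (a - T) := by ring
    rw [hrw]
    have hexp : (X j + (a - T)) ⬝ᵥ H.mulVec (X j + (a - T))
        = X j ⬝ᵥ v + 2 * ((a - T) ⬝ᵥ v) + (a - T) ⬝ᵥ H.mulVec (a - T) := by
      rw [Matrix.mulVec_add, dotProduct_add, add_dotProduct, add_dotProduct, hsym (a - T) (X j)]
      rw [hv]
      ring
    rw [hexp]
    have hGd : G ⬝ᵥ (X j + (a - T)) = G ⬝ᵥ X j + G ⬝ᵥ (a - T) := dotProduct_add _ _ _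
    have hsub : (a - T) ⬝ᵥ v = a ⬝ᵥ v - T ⬝ᵥ v := sub_dotProduct _ _ _
    rw [hGd, hsub, hc0, ← hsum, ha]
    ring
  -- inner sum over S for each k
  have hcard : (Finset.univ.erase j).card = d - 1 := by
    rw [Finset.card_erase_of_mem (Finset.mem_univ j), Finset.card_univ, Fintype.card_fin]
  set W : ℝ := ∑ i ∈ Finset.univ.erase j, (X i ⬝ᵥ v) with hW
  have hinner : ∀ k ∈ Finset.Icc 1 d,
      ∑ S ∈ (Finset.univ.erase j).powersetCard (k - 1),
          (U (∑ i ∈ insert j S, X i) - U (∑ i ∈ S, X i))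
        = ((d - 1).choose (k - 1) : ℝ) * c0
          + (((d - 1).choose (k - 1) : ℝ) - ((d - 2).choose (k - 1) : ℝ)) * W := by
    intro k hk
    have hcong : ∀ S ∈ (Finset.univ.erase j).powersetCard (k - 1),
        U (∑ i ∈ insert j S, X i) - U (∑ i ∈ S, X i) = c0 + ∑ i ∈ S, (X i ⬝ᵥ v) := by
      intro S hS
      rw [Finset.mem_powersetCard] at hS
      exact hterm S (fun h => (Finset.mem_erase.mp (hS.1 h)).1 rfl)
    rw [Finset.sum_congr rfl hcong, Finset.sum_add_distrib, Finset.sum_const,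
      Finset.card_powersetCard, hcard, sum_powersetCard_sum, hcard]
    have h21 : d - 1 - 1 = d - 2 := by omega
    rw [h21, ← Finset.mul_sum, nsmul_eq_mul]
  rw [Finset.sum_congr rfl fun k hk => by rw [hinner k hk]]
  -- split the sum
  have hCne : ∀ k ∈ Finset.Icc 1 d, (((d - 1).choose (k - 1) : ℝ)) ≠ 0 := by
    intro k hk
    rw [Finset.mem_Icc] at hk
    exact Nat.cast_ne_zero.mpr (Nat.choose_pos (by omega)).ne'
  have hsplit : ∑ k ∈ Finset.Icc 1 d, (((d - 1).choose (k - 1) : ℝ))⁻¹ *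
        (((d - 1).choose (k - 1) : ℝ) * c0
          + (((d - 1).choose (k - 1) : ℝ) - ((d - 2).choose (k - 1) : ℝ)) * W)
      = (d : ℝ) * c0 + (∑ k ∈ Finset.Icc 1 d, (((d - 1).choose (k - 1) : ℝ))⁻¹ *
          (((d - 1).choose (k - 1) : ℝ) - ((d - 2).choose (k - 1) : ℝ))) * W := by
    rw [Finset.sum_congr rfl (fun k hk => by
      rw [mul_add, ← mul_assoc, inv_mul_cancel₀ (hCne k hk), one_mul, ← mul_assoc]),
      Finset.sum_add_distrib, Finset.sum_const, ← Finset.sum_mul]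
    simp [Nat.card_Icc]
  rw [hsplit]
  have hWT : W = T ⬝ᵥ v - X j ⬝ᵥ v := by
    rw [hW, hT]
    have : (∑ i, X i) ⬝ᵥ v = ∑ i, (X i ⬝ᵥ v) := sum_dotProduct' _ _ _
    rw [this, ← Finset.sum_erase_add Finset.univ _ (Finset.mem_univ j)]
    ring
  have hdne : (d : ℝ) ≠ 0 := Nat.cast_ne_zero.mpr hd.ne'
  rcases eq_or_lt_of_le (Nat.one_le_iff_ne_zero.mpr hd.ne' : 1 ≤ d) with h1 | h2
  · -- d = 1 : W = 0
    have hW0 : W = 0 := by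
      have : (Finset.univ.erase j : Finset (Fin d)).card = 0 := by omega
      rw [hW, Finset.card_eq_zero.mp this, Finset.sum_empty]
    have hTj : T ⬝ᵥ v = X j ⬝ᵥ v := by rw [hWT] at hW0; linarith
    rw [hW0, hc0, hTj]
    field_simp
    ring
  · -- d ≥ 2
    rw [coeff_sum d h2, hWT, hc0]
    field_simp
    ring
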